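/- For every complex number q with |q| < 1, the generating function identity Σ_{n≥0} DE3(n) q^n = Σ_{n≥0} (−q^2; q^2)_n q^{2n+1} / (q; q^2)_n holds (the constant term DE3(0) being 0). -/

import Mathlib

/-- `DE1 n` is the number of partitions of `n` in which no even part is repeated
and the largest part is odd. -/
noncomputable def DE1 (n : ℕ) : ℕ :=
  Nat.card {p : n.Partition //
    (∀ k ∈ p.parts, Even k → p.parts.count k = 1) ∧
    ∃ k ∈ p.parts, Odd k ∧ ∀ j ∈ p.parts, j ≤ k}

/-- `DE2 n` is the number of partitions of `n` in which no even part is repeated,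
the largest part is odd and appears at least twice. -/
noncomputable def DE2 (n : ℕ) : ℕ :=
  Nat.card {p : n.Partition //
    (∀ k ∈ p.parts, Even k → p.parts.count k = 1) ∧
    ∃ k ∈ p.parts, Odd k ∧ 2 ≤ p.parts.count k ∧ ∀ j ∈ p.parts, j ≤ k}

/-- `DE3 n` is the number of partitions of `n` in which no even part is repeated,
the largest part is odd and appears exactly once. -/
noncomputable def DE3 (n : ℕ) : ℕ :=
  Nat.card {p : n.Partition //
    (∀ k ∈ p.parts, Even k → p.parts.count k = 1) ∧
    ∃ k ∈ p.parts, Odd k ∧ p.parts.count k = 1 ∧ ∀ j ∈ p.parts, j ≤ k}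

/-- The finite q-Pochhammer symbol `(a; q)_n = ∏_{j=0}^{n-1} (1 - a q^j)`. -/
noncomputable def qPoch (a q : ℂ) (n : ℕ) : ℂ := ∏ j ∈ Finset.range n, (1 - a * q ^ j)

namespace DE3Aux

open Finset

/-- product of tsums over a finite index, with norm summability -/
lemma pi_tsum {R : Type*} [NormedCommRing R] [CompleteSpace R] :
    ∀ (n : ℕ) (f : Fin n → ℕ → R), (∀ j, Summable fun m => ‖f j m‖) →
      (Summable fun g : Fin n → ℕ => ‖∏ j, f j (g j)‖) ∧
      (∏ j, ∑' m, f j m) = ∑' g : Fin n → ℕ, ∏ j, f j (g j) := by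
  intro n
  induction n with
  | zero =>
    intro f _
    constructor
    · exact .of_finite
    · rw [tsum_eq_single (fun i => i.elim0) (fun b hb => absurd (Subsingleton.elim b _) hb)]
      simp
  | succ n ih =>
    intro f hf
    obtain ⟨S', eq'⟩ := ih (fun j => f j.succ) (fun j => hf j.succ)
    let e : (ℕ × ((i : Fin n) → ℕ)) ≃ ((i : Fin (n+1)) → ℕ) := Fin.consEquiv (fun _ => ℕ)
    have he : ∀ z : ℕ × (Fin n → ℕ), e z = (Fin.cons z.1 z.2 : Fin (n+1) → ℕ) := fun z => rfl
    have key : ∀ z : ℕ × (Fin n → ℕ),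
        (∏ j : Fin (n+1), f j (e z j)) = f 0 z.1 * ∏ j : Fin n, f j.succ (z.2 j) := by
      intro z
      rw [he z, Fin.prod_univ_succ]
      simp
    have h2 := Summable.mul_norm (hf 0) S'
    constructor
    · refine (Equiv.summable_iff e).mp (h2.congr fun z => ?_)
      show _ = ‖∏ j : Fin (n+1), f j (e z j)‖
      rw [key z]
    · rw [Fin.prod_univ_succ, eq', tsum_mul_tsum_of_summable_norm (hf 0) S',
        ← e.tsum_eq (fun g => ∏ j, f j (g j))]
      exact tsum_congr fun z => (key z).symm

/-- the weight of a "pad datum": one part `2n+1`, even parts `2j+2` for `j ∈ a.1`,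
and `a.2 j` copies of each odd part `2j+1`. -/
def wt (n : ℕ) (a : Finset (Fin n) × (Fin n → ℕ)) : ℕ :=
  2 * n + 1 + ((∑ j ∈ a.1, (2 * (j : ℕ) + 2)) + ∑ j : Fin n, a.2 j * (2 * (j : ℕ) + 1))

/-- The per-`n` norm summability. -/
lemma summable_norm_wt {K : Type*} [NormedField K] [CompleteSpace K] {ξ : K} (hξ : ‖ξ‖ < 1)
    (n : ℕ) : Summable fun a : Finset (Fin n) × (Fin n → ℕ) => ‖ξ ^ wt n a‖ := by
  have hx0 : (0:ℝ) ≤ ‖ξ‖ := norm_nonneg ξ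
  have hsumj : ∀ j : Fin n, Summable fun m : ℕ => ‖ξ ^ (m * (2 * (j : ℕ) + 1))‖ := by
    intro j
    have h1 : ‖ξ‖ ^ (2 * (j : ℕ) + 1) < 1 := pow_lt_one₀ hx0 hξ (by omega)
    refine (summable_geometric_of_lt_one (pow_nonneg hx0 _) h1).congr fun m => ?_
    rw [← pow_mul', ← norm_pow]
  obtain ⟨Spi, eqpi⟩ := pi_tsum n (fun j m => ξ ^ (m * (2 * (j : ℕ) + 1))) hsumj
  refine (summable_prod_of_nonneg (fun a => norm_nonneg _)).mpr ⟨?_, ?_⟩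
  · intro S
    have := Spi.mul_left (‖ξ‖ ^ (2 * n + 1 + ∑ j ∈ S, (2 * (j : ℕ) + 2)))
    refine this.congr fun g => ?_
    rw [norm_pow]
    simp only [wt]
    rw [show ‖∏ j : Fin n, ξ ^ (g j * (2 * (j : ℕ) + 1))‖
        = ∏ j : Fin n, ‖ξ‖ ^ (g j * (2 * (j : ℕ) + 1)) by rw [norm_prod]; simp [norm_pow]]
    rw [Finset.prod_pow_eq_pow_sum, ← pow_add, add_assoc]
  · exact Summable.of_finite

/-- The per-`n` tsum value. -/
lemma tsum_wt {K : Type*} [NormedField K] [CompleteSpace K] {ξ : K} (hξ : ‖ξ‖ < 1) (n : ℕ) :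
    ∑' a : Finset (Fin n) × (Fin n → ℕ), ξ ^ wt n a =
      (∏ j ∈ range n, (1 + ξ ^ (2*j+2))) * ξ ^ (2*n+1) * ∏ j ∈ range n, (1 - ξ ^ (2*j+1))⁻¹ := by
  have hx0 : (0:ℝ) ≤ ‖ξ‖ := norm_nonneg ξ
  have hsumj : ∀ j : Fin n, Summable fun m : ℕ => ‖ξ ^ (m * (2 * (j : ℕ) + 1))‖ := by
    intro j
    have h1 : ‖ξ‖ ^ (2 * (j : ℕ) + 1) < 1 := pow_lt_one₀ hx0 hξ (by omega)
    refine (summable_geometric_of_lt_one (pow_nonneg hx0 _) h1).congr fun m => ?_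
    rw [← pow_mul', ← norm_pow]
  obtain ⟨Spi, eqpi⟩ := pi_tsum n (fun j m => ξ ^ (m * (2 * (j : ℕ) + 1))) hsumj
  have hfib : ∀ S : Finset (Fin n), Summable fun g : Fin n → ℕ => ξ ^ wt n (S, g) := by
    intro S
    have := (Spi.of_norm).mul_left (ξ ^ (2 * n + 1 + ∑ j ∈ S, (2 * (j : ℕ) + 2)))
    refine this.congr fun g => ?_
    simp only [wt]
    rw [Finset.prod_pow_eq_pow_sum, ← pow_add, add_assoc]
  have hkey : ∀ (S : Finset (Fin n)) (g : Fin n → ℕ),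
      ξ ^ wt n (S, g) = (ξ ^ (2*n+1) * ξ ^ (∑ j ∈ S, (2 * (j : ℕ) + 2))) *
        ∏ j : Fin n, ξ ^ (g j * (2 * (j : ℕ) + 1)) := by
    intro S g
    simp only [wt]
    rw [Finset.prod_pow_eq_pow_sum, ← pow_add, ← pow_add, ← add_assoc]
  rw [Summable.tsum_prod' ((summable_norm_wt hξ n).of_norm) hfib, tsum_fintype]
  have hgeo : ∀ j : Fin n, (∑' m : ℕ, ξ ^ (m * (2 * (j : ℕ) + 1)))
      = (1 - ξ ^ (2 * (j : ℕ) + 1))⁻¹ := by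
    intro j
    rw [tsum_congr fun m => (pow_mul' ξ m _)]
    exact tsum_geometric_of_norm_lt_one (by
      rw [norm_pow]; exact pow_lt_one₀ hx0 hξ (by omega))
  have hinner : ∀ S : Finset (Fin n), (∑' g : Fin n → ℕ, ξ ^ wt n (S, g))
      = (ξ ^ (2*n+1) * ξ ^ (∑ j ∈ S, (2 * (j : ℕ) + 2))) *
          ∏ j : Fin n, (1 - ξ ^ (2 * (j : ℕ) + 1))⁻¹ := by
    intro S
    rw [tsum_congr (hkey S), tsum_mul_left, ← eqpi, Finset.prod_congr rfl fun j _ => hgeo j]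
  rw [Finset.sum_congr rfl fun S _ => hinner S]
  have hS : ∀ S : Finset (Fin n), ξ ^ (∑ j ∈ S, (2 * (j : ℕ) + 2))
      = ∏ j ∈ S, ξ ^ (2 * (j : ℕ) + 2) := fun S => (Finset.prod_pow_eq_pow_sum S _ ξ).symm
  have hprodadd : ∑ S : Finset (Fin n), ξ ^ (∑ j ∈ S, (2 * (j : ℕ) + 2))
      = ∏ j : Fin n, (1 + ξ ^ (2 * (j : ℕ) + 2)) := by
    rw [Finset.sum_congr rfl fun S _ => hS S]
    rw [show (∏ j : Fin n, (1 + ξ ^ (2 * (j : ℕ) + 2)))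
        = ∏ j : Fin n, (ξ ^ (2 * (j : ℕ) + 2) + (fun _ : Fin n => (1:K)) j) by
      exact Finset.prod_congr rfl fun j _ => add_comm _ _]
    rw [Finset.prod_add, Finset.powerset_univ]
    exact Finset.sum_congr rfl fun S _ => by simp
  calc ∑ S : Finset (Fin n), (ξ ^ (2*n+1) * ξ ^ (∑ j ∈ S, (2 * (j : ℕ) + 2))) *
          ∏ j : Fin n, (1 - ξ ^ (2 * (j : ℕ) + 1))⁻¹
      = (∑ S : Finset (Fin n), ξ ^ (∑ j ∈ S, (2 * (j : ℕ) + 2))) * ξ ^ (2*n+1) *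
          ∏ j : Fin n, (1 - ξ ^ (2 * (j : ℕ) + 1))⁻¹ := by
        rw [Finset.sum_mul, Finset.sum_mul]
        exact Finset.sum_congr rfl fun S _ => by ring
    _ = (∏ j ∈ range n, (1 + ξ ^ (2*j+2))) * ξ ^ (2*n+1) *
          ∏ j ∈ range n, (1 - ξ ^ (2*j+1))⁻¹ := by
        rw [hprodadd, Fin.prod_univ_eq_prod_range (fun j => (1 + ξ ^ (2*j+2))),
          Fin.prod_univ_eq_prod_range (fun j => (1 - ξ ^ (2*j+1))⁻¹)]

/-- uniform bound for the per-`n` tsum over the reals -/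
lemma tsum_wt_le {x : ℝ} (hx0 : 0 ≤ x) (hx : x < 1) (n : ℕ) :
    ∑' a : Finset (Fin n) × (Fin n → ℕ), x ^ wt n a ≤
      (Real.exp ((1-x)⁻¹) * Real.exp ((1-x)⁻¹ * (1-x)⁻¹)) * (x * (x^2) ^ n) := by
  have hxn : ‖x‖ < 1 := by rwa [Real.norm_eq_abs, abs_of_nonneg hx0]
  rw [tsum_wt hxn n]
  have h1x : (0:ℝ) < 1 - x := by linarith
  have hsum_le : ∀ c : ℕ, 1 ≤ c → ∑ j ∈ range n, x ^ (2*j+c) ≤ (1-x)⁻¹ := by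
    intro c hc
    calc ∑ j ∈ range n, x ^ (2*j+c) ≤ ∑ j ∈ range n, x ^ j :=
          Finset.sum_le_sum fun j _ => pow_le_pow_of_le_one hx0 hx.le (by omega)
      _ ≤ ∑' j : ℕ, x ^ j :=
          Summable.sum_le_tsum _ (fun i _ => pow_nonneg hx0 i) (summable_geometric_of_lt_one hx0 hx)
      _ = (1-x)⁻¹ := tsum_geometric_of_lt_one hx0 hx
  have hP : ∏ j ∈ range n, (1 + x^(2*j+2)) ≤ Real.exp ((1-x)⁻¹) := by
    calc ∏ j ∈ range n, (1 + x^(2*j+2)) ≤ ∏ j ∈ range n, Real.exp (x^(2*j+2)) :=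
          Finset.prod_le_prod (fun j _ => by positivity)
            (fun j _ => by rw [add_comm]; exact Real.add_one_le_exp _)
      _ = Real.exp (∑ j ∈ range n, x^(2*j+2)) := (Real.exp_sum _ _).symm
      _ ≤ _ := Real.exp_le_exp.mpr (hsum_le 2 (by norm_num))
  have hyfact : ∀ j : ℕ, x^(2*j+1) ≤ x := by
    intro j
    calc x^(2*j+1) ≤ x^1 := pow_le_pow_of_le_one hx0 hx.le (by omega)
      _ = x := pow_one x
  have h1y : ∀ j : ℕ, (0:ℝ) < 1 - x^(2*j+1) := by
    intro j; have := hyfact j; linarith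
  have hQf : ∀ j : ℕ, (1 - x^(2*j+1))⁻¹ ≤ Real.exp (x^(2*j+1) * (1-x)⁻¹) := by
    intro j
    have hy0 : (0:ℝ) ≤ x^(2*j+1) := pow_nonneg hx0 _
    have hyx := hyfact j
    have h1y' := h1y j
    have hinv : (1-x) * (1-x)⁻¹ = 1 := mul_inv_cancel₀ (by linarith)
    have ht0 : (0:ℝ) ≤ (1-x)⁻¹ := inv_nonneg.mpr h1x.le
    have key : 1 ≤ (1 + x^(2*j+1) * (1-x)⁻¹) * (1 - x^(2*j+1)) := by
      nlinarith [mul_nonneg (mul_nonneg hy0 ht0) (sub_nonneg.mpr hyx)]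
    calc (1 - x^(2*j+1))⁻¹ = 1 / (1 - x^(2*j+1)) := (one_div _).symm
      _ ≤ 1 + x^(2*j+1) * (1-x)⁻¹ := by rw [div_le_iff₀ h1y']; linarith [key]
      _ ≤ Real.exp (x^(2*j+1) * (1-x)⁻¹) := by
          linarith [Real.add_one_le_exp (x^(2*j+1) * (1-x)⁻¹)]
  have hQ : ∏ j ∈ range n, (1 - x^(2*j+1))⁻¹ ≤ Real.exp ((1-x)⁻¹ * (1-x)⁻¹) := by
    calc ∏ j ∈ range n, (1 - x^(2*j+1))⁻¹
        ≤ ∏ j ∈ range n, Real.exp (x^(2*j+1) * (1-x)⁻¹) :=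
          Finset.prod_le_prod (fun j _ => inv_nonneg.mpr (h1y j).le) (fun j _ => hQf j)
      _ = Real.exp (∑ j ∈ range n, x^(2*j+1) * (1-x)⁻¹) := (Real.exp_sum _ _).symm
      _ = Real.exp ((∑ j ∈ range n, x^(2*j+1)) * (1-x)⁻¹) := by rw [Finset.sum_mul]
      _ ≤ _ := Real.exp_le_exp.mpr
          (mul_le_mul_of_nonneg_right (hsum_le 1 le_rfl) (inv_nonneg.mpr h1x.le))
  have hx2n : x^(2*n+1) = x * (x^2)^n := by rw [pow_add, pow_mul, pow_one, mul_comm]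
  have hPpos : (0:ℝ) ≤ ∏ j ∈ range n, (1 + x^(2*j+2)) :=
    Finset.prod_nonneg fun j _ => by positivity
  have hQpos : (0:ℝ) ≤ ∏ j ∈ range n, (1 - x^(2*j+1))⁻¹ :=
    Finset.prod_nonneg fun j _ => inv_nonneg.mpr (h1y j).le
  calc (∏ j ∈ range n, (1 + x^(2*j+2))) * x^(2*n+1) * ∏ j ∈ range n, (1 - x^(2*j+1))⁻¹
      ≤ (Real.exp ((1-x)⁻¹) * x^(2*n+1)) * Real.exp ((1-x)⁻¹ * (1-x)⁻¹) := by
        apply mul_le_mul _ hQ hQpos (by positivity)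
        exact mul_le_mul_of_nonneg_right hP (pow_nonneg hx0 _)
    _ = (Real.exp ((1-x)⁻¹) * Real.exp ((1-x)⁻¹ * (1-x)⁻¹)) * (x * (x^2) ^ n) := by
        rw [hx2n]; ring

/-- global real summability over the sigma type -/
lemma summable_global {x : ℝ} (hx0 : 0 ≤ x) (hx : x < 1) :
    Summable fun t : Σ n : ℕ, Finset (Fin n) × (Fin n → ℕ) => x ^ wt t.1 t.2 := by
  have hxn : ‖x‖ < 1 := by rwa [Real.norm_eq_abs, abs_of_nonneg hx0]
  refine (summable_sigma_of_nonneg (fun t => pow_nonneg hx0 _)).mpr ⟨?_, ?_⟩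
  · intro n
    exact (summable_norm_wt hxn n).congr fun a => by
      rw [Real.norm_eq_abs, abs_of_nonneg (pow_nonneg hx0 _)]
  · refine Summable.of_nonneg_of_le (fun n => tsum_nonneg fun a => pow_nonneg hx0 _)
      (fun n => tsum_wt_le hx0 hx n) ?_
    have hx2 : (0:ℝ) ≤ x^2 := by positivity
    have hx21 : x^2 < 1 := by nlinarith
    exact ((summable_geometric_of_lt_one hx2 hx21).mul_left x).mul_left _

/-- the parts multiset associated to a pad datum -/
def pts (n : ℕ) (a : Finset (Fin n) × (Fin n → ℕ)) : Multiset ℕ :=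
  (2 * n + 1) ::ₘ (Multiset.map (fun j : Fin n => 2 * (j : ℕ) + 2) a.1.val +
    Multiset.bind Finset.univ.val (fun j : Fin n => Multiset.replicate (a.2 j) (2 * (j : ℕ) + 1)))

lemma top_mem {n : ℕ} (a : Finset (Fin n) × (Fin n → ℕ)) : 2 * n + 1 ∈ pts n a :=
  Multiset.mem_cons_self _ _

lemma mem_pts {n : ℕ} (a : Finset (Fin n) × (Fin n → ℕ)) {v : ℕ} :
    v ∈ pts n a ↔ v = 2 * n + 1 ∨ (∃ j ∈ a.1, v = 2 * (j : ℕ) + 2) ∨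
      (∃ j : Fin n, a.2 j ≠ 0 ∧ v = 2 * (j : ℕ) + 1) := by
  simp only [pts, Multiset.mem_cons, Multiset.mem_add, Multiset.mem_map, Multiset.mem_bind,
    Multiset.mem_replicate, ← Finset.mem_def, Finset.mem_univ, true_and]
  constructor
  · rintro (h | ⟨j, hj, rfl⟩ | ⟨j, h0, rfl⟩)
    · exact Or.inl h
    · exact Or.inr (Or.inl ⟨j, hj, rfl⟩)
    · exact Or.inr (Or.inr ⟨j, h0, rfl⟩)
  · rintro (h | ⟨j, hj, rfl⟩ | ⟨j, h0, rfl⟩)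
    · exact Or.inl h
    · exact Or.inr (Or.inl ⟨j, hj, rfl⟩)
    · exact Or.inr (Or.inr ⟨j, h0, rfl⟩)

lemma mem_bound {n : ℕ} (a : Finset (Fin n) × (Fin n → ℕ)) {v : ℕ} (h : v ∈ pts n a) :
    0 < v ∧ v ≤ 2 * n + 1 := by
  rcases (mem_pts a).mp h with h | ⟨j, _, rfl⟩ | ⟨j, _, rfl⟩
  · omega
  · have := j.isLt; omega
  · have := j.isLt; omega

lemma count_even {n : ℕ} (a : Finset (Fin n) × (Fin n → ℕ)) (j : Fin n) :
    (pts n a).count (2 * (j : ℕ) + 2) = if j ∈ a.1 then 1 else 0 := by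
  have inj : Function.Injective (fun j : Fin n => 2 * (j : ℕ) + 2) := by
    intro x y h
    simp only at h
    exact Fin.ext (by omega)
  rw [pts, Multiset.count_cons, Multiset.count_add]
  have h1 : (Multiset.map (fun i : Fin n => 2 * (i : ℕ) + 2) a.1.val).count (2 * (j : ℕ) + 2)
      = a.1.val.count j := Multiset.count_map_eq_count' _ _ inj j
  have h2 : (Multiset.bind Finset.univ.val fun i : Fin n =>
      Multiset.replicate (a.2 i) (2 * (i : ℕ) + 1)).count (2 * (j : ℕ) + 2) = 0 := by
    rw [Multiset.count_eq_zero]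
    intro hmem
    obtain ⟨i, -, hi⟩ := Multiset.mem_bind.mp hmem
    have := (Multiset.mem_replicate.mp hi).2
    omega
  have h3 : ¬(2 * (j : ℕ) + 2 = 2 * n + 1) := by omega
  rw [h1, h2, if_neg h3]
  by_cases h : j ∈ a.1
  · rw [Multiset.count_eq_one_of_mem a.1.nodup (Finset.mem_def.mp h), if_pos h]
  · rw [Multiset.count_eq_zero_of_notMem (fun hc => h (Finset.mem_def.mpr hc)), if_neg h]

lemma count_even_zero {n : ℕ} (a : Finset (Fin n) × (Fin n → ℕ)) {v : ℕ} (hv : Even v)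
    (hne : ∀ j : Fin n, v ≠ 2 * (j : ℕ) + 2) : (pts n a).count v = 0 := by
  rw [Multiset.count_eq_zero]
  intro hmem
  have hv2 : v % 2 = 0 := Nat.even_iff.mp hv
  rcases (mem_pts a).mp hmem with h | ⟨j, _, hj⟩ | ⟨j, _, hj⟩
  · omega
  · exact hne j hj
  · omega

lemma count_odd {n : ℕ} (a : Finset (Fin n) × (Fin n → ℕ)) (j : Fin n) :
    (pts n a).count (2 * (j : ℕ) + 1) = a.2 j := by
  rw [pts, Multiset.count_cons, Multiset.count_add]
  have h1 : (Multiset.map (fun i : Fin n => 2 * (i : ℕ) + 2) a.1.val).count (2 * (j : ℕ) + 1) = 0 := by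
    rw [Multiset.count_eq_zero]
    intro hmem
    obtain ⟨i, -, hi⟩ := Multiset.mem_map.mp hmem
    omega
  have h3 : ¬(2 * (j : ℕ) + 1 = 2 * n + 1) := by have := j.isLt; omega
  rw [h1, if_neg h3, Multiset.count_bind]
  have h4 : (Multiset.map (fun b : Fin n =>
        (Multiset.replicate (a.2 b) (2 * (b : ℕ) + 1)).count (2 * (j : ℕ) + 1))
        Finset.univ.val).sum
      = ∑ i : Fin n, (Multiset.replicate (a.2 i) (2 * (i : ℕ) + 1)).count (2 * (j : ℕ) + 1) :=
    (Finset.sum_eq_multiset_sum _ _).symm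
  rw [h4]
  have h5 : ∀ i : Fin n,
      (Multiset.replicate (a.2 i) (2 * (i : ℕ) + 1)).count (2 * (j : ℕ) + 1)
        = if i = j then a.2 i else 0 := by
    intro i
    rw [Multiset.count_replicate]
    by_cases h : i = j
    · subst h; simp
    · have hne : ¬(2 * (i : ℕ) + 1 = 2 * (j : ℕ) + 1) := fun hc => h (Fin.ext (by omega))
      rw [if_neg hne, if_neg h]
  rw [Finset.sum_congr rfl fun i _ => h5 i, Finset.sum_ite_eq' Finset.univ j]
  simp

lemma count_odd_zero {n : ℕ} (a : Finset (Fin n) × (Fin n → ℕ)) {v : ℕ} (hv : Odd v)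
    (hgt : 2 * n + 1 < v) : (pts n a).count v = 0 := by
  rw [Multiset.count_eq_zero]
  intro hmem
  have := (mem_bound a hmem).2
  omega

lemma count_top {n : ℕ} (a : Finset (Fin n) × (Fin n → ℕ)) :
    (pts n a).count (2 * n + 1) = 1 := by
  rw [pts, Multiset.count_cons, Multiset.count_add]
  have h1 : (Multiset.map (fun i : Fin n => 2 * (i : ℕ) + 2) a.1.val).count (2 * n + 1) = 0 := by
    rw [Multiset.count_eq_zero]
    intro hmem
    obtain ⟨i, -, hi⟩ := Multiset.mem_map.mp hmem
    omega
  have h2 : (Multiset.bind Finset.univ.val fun i : Fin n =>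
      Multiset.replicate (a.2 i) (2 * (i : ℕ) + 1)).count (2 * n + 1) = 0 := by
    rw [Multiset.count_eq_zero]
    intro hmem
    obtain ⟨i, -, hi⟩ := Multiset.mem_bind.mp hmem
    have h := (Multiset.mem_replicate.mp hi).2
    have := i.isLt
    omega
  rw [h1, h2, if_pos rfl]

lemma sum_pts {n : ℕ} (a : Finset (Fin n) × (Fin n → ℕ)) : (pts n a).sum = wt n a := by
  rw [pts, Multiset.sum_cons, Multiset.sum_add, Multiset.sum_bind, wt]
  have e1 : (Multiset.map (fun j : Fin n => 2 * (j : ℕ) + 2) a.1.val).sum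
      = ∑ j ∈ a.1, (2 * (j : ℕ) + 2) := rfl
  have e2 : (Multiset.map (fun j : Fin n =>
        (Multiset.replicate (a.2 j) (2 * (j : ℕ) + 1)).sum) Finset.univ.val).sum
      = ∑ j : Fin n, (Multiset.replicate (a.2 j) (2 * (j : ℕ) + 1)).sum := rfl
  rw [e1, e2]
  congr 1
  congr 1
  exact Finset.sum_congr rfl fun j _ => by rw [Multiset.sum_replicate, smul_eq_mul]

/-- the DE3 predicate -/
def Pd (N : ℕ) (p : N.Partition) : Prop :=
  (∀ k ∈ p.parts, Even k → p.parts.count k = 1) ∧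
    ∃ k ∈ p.parts, Odd k ∧ p.parts.count k = 1 ∧ ∀ j ∈ p.parts, j ≤ k

/-- the partition associated to a pad datum -/
def toPart (n : ℕ) (a : Finset (Fin n) × (Fin n → ℕ)) : (wt n a).Partition :=
  ⟨pts n a, fun h => (mem_bound a h).1, sum_pts a⟩

lemma pd_toPart (n : ℕ) (a : Finset (Fin n) × (Fin n → ℕ)) : Pd (wt n a) (toPart n a) := by
  constructor
  · intro k hk hke
    have hk2 : k % 2 = 0 := Nat.even_iff.mp hke
    rcases (mem_pts a).mp hk with h | ⟨j, hj, rfl⟩ | ⟨j, _, hj⟩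
    · omega
    · rw [show (toPart n a).parts = pts n a from rfl, count_even, if_pos hj]
    · omega
  · refine ⟨2 * n + 1, top_mem a, odd_two_mul_add_one n, count_top a,
      fun j hj => (mem_bound a hj).2⟩

/-- map from pad data to DE3 partitions -/
def toFun (t : Σ n : ℕ, Finset (Fin n) × (Fin n → ℕ)) :
    Σ N : ℕ, {p : N.Partition // Pd N p} :=
  ⟨wt t.1 t.2, ⟨toPart t.1 t.2, pd_toPart t.1 t.2⟩⟩

lemma toFun_inj : Function.Injective toFun := by
  rintro ⟨n₁, S₁, m₁⟩ ⟨n₂, S₂, m₂⟩ h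
  have hparts : pts n₁ (S₁, m₁) = pts n₂ (S₂, m₂) :=
    congrArg (fun x : Σ N : ℕ, {p : N.Partition // Pd N p} => x.2.1.parts) h
  have e1 : 2 * n₁ + 1 ≤ 2 * n₂ + 1 :=
    (mem_bound (S₂, m₂) (hparts ▸ top_mem (S₁, m₁))).2
  have e2 : 2 * n₂ + 1 ≤ 2 * n₁ + 1 :=
    (mem_bound (S₁, m₁) (hparts.symm ▸ top_mem (S₂, m₂))).2
  have hn : n₁ = n₂ := by omega
  subst hn
  have hS : S₁ = S₂ := by
    ext j
    have hc := congrArg (Multiset.count (2 * (j : ℕ) + 2)) hparts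
    rw [count_even, count_even] at hc
    by_cases h1 : j ∈ S₁ <;> by_cases h2 : j ∈ S₂ <;> simp [h1, h2] at hc ⊢
  have hm : m₁ = m₂ := by
    funext j
    have hc := congrArg (Multiset.count (2 * (j : ℕ) + 1)) hparts
    rwa [count_odd, count_odd] at hc
  rw [hS, hm]

lemma toFun_surj : Function.Surjective toFun := by
  rintro ⟨N, p, hp⟩
  obtain ⟨h1, k0, hk0mem, hk0odd, hk0cnt, hk0max⟩ := id hp
  obtain ⟨n, rfl⟩ : ∃ n, k0 = 2 * n + 1 := by
    rcases hk0odd with ⟨c, hc⟩; exact ⟨c, by omega⟩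
  set a : Finset (Fin n) × (Fin n → ℕ) :=
    (Finset.univ.filter (fun j : Fin n => 2 * (j : ℕ) + 2 ∈ p.parts),
     fun j : Fin n => p.parts.count (2 * (j : ℕ) + 1)) with ha
  have hparts : pts n a = p.parts := by
    ext v
    rcases Nat.even_or_odd v with hv | hv
    · -- v even
      by_cases hvp : v ∈ p.parts
      · have hcv : p.parts.count v = 1 := h1 v hvp hv
        have hvle : v ≤ 2 * n + 1 := hk0max v hvp
        have hvpos : 0 < v := p.parts_pos hvp
        obtain ⟨c, hc⟩ := hv
        have hcn : c - 1 < n := by omega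
        set j : Fin n := ⟨c - 1, hcn⟩ with hj
        have hvj : v = 2 * (j : ℕ) + 2 := by show v = 2 * (c - 1) + 2; omega
        have hjmem : j ∈ a.1 := by
          simp only [ha, Finset.mem_filter, Finset.mem_univ, true_and]
          rw [← hvj]
          exact hvp
        rw [hvj, count_even, if_pos hjmem, ← hvj, hcv]
      · rw [Multiset.count_eq_zero_of_notMem hvp]
        by_cases hex : ∃ j : Fin n, v = 2 * (j : ℕ) + 2
        · obtain ⟨j, hj⟩ := hex
          have hjmem : j ∉ a.1 := by
            simp only [ha, Finset.mem_filter, Finset.mem_univ, true_and]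
            rw [← hj]
            exact hvp
          rw [hj, count_even, if_neg hjmem]
        · push_neg at hex
          exact count_even_zero a hv hex
    · -- v odd
      obtain ⟨c, hc⟩ := hv
      rcases lt_trichotomy c n with hcn | hcn | hcn
      · set j : Fin n := ⟨c, hcn⟩ with hj
        have hvj : v = 2 * (j : ℕ) + 1 := by show v = 2 * c + 1; omega
        rw [hvj, count_odd]
      · subst hcn
        rw [show v = 2 * c + 1 by omega, count_top, hk0cnt]
      · have hvgt : 2 * n + 1 < v := by omega
        rw [count_odd_zero a ⟨c, hc⟩ hvgt, eq_comm, Multiset.count_eq_zero]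
        intro hvp
        have := hk0max v hvp
        omega
  have hN : wt n a = N := by rw [← sum_pts a, hparts, p.parts_sum]
  refine ⟨⟨n, a⟩, ?_⟩
  clear_value a
  subst hN
  exact Sigma.ext rfl (heq_of_eq (Subtype.ext (Nat.Partition.ext hparts)))

/-- the weight-preserving equivalence -/
noncomputable def E : (Σ n : ℕ, Finset (Fin n) × (Fin n → ℕ)) ≃
    Σ N : ℕ, {p : N.Partition // Pd N p} :=
  Equiv.ofBijective toFun ⟨toFun_inj, toFun_surj⟩

end DE3Aux

theorem stmt_12 (q : ℂ) (hq : ‖q‖ < 1) :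
    ∑' n : ℕ, (DE3 n : ℂ) * q ^ n =
      ∑' n : ℕ, qPoch (-q ^ 2) (q ^ 2) n * q ^ (2 * n + 1) / qPoch q (q ^ 2) n := by
  classical
  have hq' : ‖q‖ < 1 := hq
  have hnorm : Summable fun t : Σ n : ℕ, Finset (Fin n) × (Fin n → ℕ) =>
      ‖q ^ DE3Aux.wt t.1 t.2‖ := by
    refine (DE3Aux.summable_global (norm_nonneg q) hq').congr fun t => ?_
    rw [norm_pow]
  have hsum : Summable fun t : Σ n : ℕ, Finset (Fin n) × (Fin n → ℕ) =>
      q ^ DE3Aux.wt t.1 t.2 := hnorm.of_norm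
  have hLsig : Summable fun s : Σ N : ℕ, {p : N.Partition // DE3Aux.Pd N p} => q ^ s.1 :=
    (Equiv.summable_iff DE3Aux.E).mp (hsum.congr fun t => rfl)
  have hR : ∑' n : ℕ, qPoch (-q ^ 2) (q ^ 2) n * q ^ (2 * n + 1) / qPoch q (q ^ 2) n
      = ∑' t : Σ n : ℕ, Finset (Fin n) × (Fin n → ℕ), q ^ DE3Aux.wt t.1 t.2 := by
    rw [Summable.tsum_sigma hsum]
    refine (tsum_congr fun n => ?_).symm
    rw [DE3Aux.tsum_wt hq' n]
    rw [qPoch, qPoch, div_eq_mul_inv, ← Finset.prod_inv_distrib]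
    refine (congrArg₂ (· * ·) (congrArg₂ (· * ·) ?_ rfl) ?_).symm
    · exact Finset.prod_congr rfl fun j _ => by ring
    · exact Finset.prod_congr rfl fun j _ => by
        rw [show (1 : ℂ) - q * (q^2)^j = 1 - q^(2*j+1) by ring]
  have hL : ∑' N : ℕ, (DE3 N : ℂ) * q ^ N
      = ∑' t : Σ n : ℕ, Finset (Fin n) × (Fin n → ℕ), q ^ DE3Aux.wt t.1 t.2 := by
    calc ∑' N : ℕ, (DE3 N : ℂ) * q ^ N
        = ∑' N : ℕ, ∑' _p : {p : N.Partition // DE3Aux.Pd N p}, q ^ N := by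
          refine tsum_congr fun N => ?_
          rw [tsum_const, nsmul_eq_mul]
          rfl
      _ = ∑' s : Σ N : ℕ, {p : N.Partition // DE3Aux.Pd N p}, q ^ s.1 :=
          (Summable.tsum_sigma hLsig).symm
      _ = _ := by
          rw [← Equiv.tsum_eq DE3Aux.E (fun s => q ^ s.1)]
          rfl
  rw [hL, hR]
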